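/- Let R be a finite ring and P = Σ_{j=0}^d p_j t^j ∈ R[t] a polynomial whose leading coefficient p_d is invertible in R. Then the equation P·x = 0 has at most |R|^d solutions x in the formal power series ring R[[t]]. Moreover, if the lowest nonzero coefficient of P is invertible, then x = 0 is the only solution. -/

import Mathlib

open Polynomial Finset

/-- If the trailing coefficient is a unit, the only power series annihilated is 0. -/
lemma aux_trailing {R : Type} [CommRing R] (P : Polynomial R) (h : IsUnit P.trailingCoeff)
    (x : PowerSeries R) (hx : (P : PowerSeries R) * x = 0) : x = 0 := by
  obtain ⟨u, hu⟩ := h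
  set k := P.natTrailingDegree with hk
  have key : ∀ n : ℕ, PowerSeries.coeff n x = 0 := by
    intro n
    induction n using Nat.strong_induction_on with
    | _ n ih =>
      have h0 : PowerSeries.coeff (n + k) ((P : PowerSeries R) * x) = 0 := by
        rw [hx]; simp
      rw [PowerSeries.coeff_mul] at h0
      rw [Finset.Nat.sum_antidiagonal_eq_sum_range_succ_mk] at h0
      have hsum : ∑ j ∈ Finset.range (n + k + 1),
          PowerSeries.coeff j (P : PowerSeries R) * PowerSeries.coeff (n + k - j) x
          = P.trailingCoeff * PowerSeries.coeff n x := by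
        rw [Finset.sum_eq_single k]
        · simp [Polynomial.coeff_coe, Polynomial.trailingCoeff, hk]
        · intro j hj hjk
          have hj' := Finset.mem_range.mp hj
          rcases lt_or_gt_of_ne hjk with hlt | hgt
          · rw [Polynomial.coeff_coe, Polynomial.coeff_eq_zero_of_lt_natTrailingDegree hlt]
            ring
          · rw [ih (n + k - j) (by omega)]; ring
        · intro hk'; exact absurd (Finset.mem_range.mpr (by omega)) hk'
      rw [hsum] at h0
      have := congrArg (fun r => (↑u⁻¹ : R) * r) h0
      simpa [← hu, ← mul_assoc] using this
  ext n
  simp [key n]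


open Polynomial Finset

/-- Recursion: coefficient `n` of a solution is a combination of the next `d` coefficients. -/
lemma aux_rec {R : Type} [CommRing R] (P : Polynomial R) (w : R)
    (hw : w * P.leadingCoeff = 1) (x : PowerSeries R)
    (hx : (P : PowerSeries R) * x = 0) (n : ℕ) :
    PowerSeries.coeff n x =
      ∑ k ∈ Finset.range P.natDegree,
        (-(w * P.coeff (P.natDegree - 1 - k))) * PowerSeries.coeff (n + 1 + k) x := by
  set d := P.natDegree with hd
  have h0 : PowerSeries.coeff (n + d) ((P : PowerSeries R) * x) = 0 := by rw [hx]; simp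
  rw [PowerSeries.coeff_mul, Finset.Nat.sum_antidiagonal_eq_sum_range_succ_mk] at h0
  simp only [Polynomial.coeff_coe] at h0
  have htr : ∑ j ∈ Finset.range (d + 1), P.coeff j * PowerSeries.coeff (n + d - j) x
      = ∑ j ∈ Finset.range (n + d).succ, P.coeff j * PowerSeries.coeff (n + d - j) x := by
    apply Finset.sum_subset (Finset.range_subset_range.mpr (by omega))
    intro j hj hj'
    have : d < j := by
      simp only [Finset.mem_range] at hj hj'; omega
    rw [Polynomial.coeff_eq_zero_of_natDegree_lt this]
    ring
  rw [← htr, Finset.sum_range_succ] at h0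
  have hnd : n + d - d = n := by omega
  rw [hnd] at h0
  have h1 : P.leadingCoeff * PowerSeries.coeff n x
      = - ∑ j ∈ Finset.range d, P.coeff j * PowerSeries.coeff (n + d - j) x := by
    rw [← Polynomial.coeff_natDegree (p := P), ← hd]
    linear_combination h0
  have h2 : PowerSeries.coeff n x
      = ∑ j ∈ Finset.range d, (-(w * P.coeff j)) * PowerSeries.coeff (n + d - j) x := by
    calc PowerSeries.coeff n x
        = w * (P.leadingCoeff * PowerSeries.coeff n x) := by
          rw [← mul_assoc, hw, one_mul]
      _ = w * (- ∑ j ∈ Finset.range d, P.coeff j * PowerSeries.coeff (n + d - j) x) := by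
          rw [h1]
      _ = _ := by
          rw [mul_neg, Finset.mul_sum, ← Finset.sum_neg_distrib]
          exact Finset.sum_congr rfl fun j _ => by ring
  rw [h2, ← Finset.sum_range_reflect]
  apply Finset.sum_congr rfl
  intro j hj
  have hj' := Finset.mem_range.mp hj
  have : n + d - (d - 1 - j) = n + 1 + j := by omega
  rw [this]


/-- In a finite monoid every element has an idempotent positive power. -/
lemma aux_idem {M : Type*} [Monoid M] [Finite M] (a : M) :
    ∃ N : ℕ, 1 ≤ N ∧ a ^ N * a ^ N = a ^ N := by
  obtain ⟨m, n, hmn, h⟩ := Finite.exists_ne_map_eq_of_infinite (fun k : ℕ => a ^ k)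
  wlog hlt : m < n generalizing m n
  · exact this n m (Ne.symm hmn) h.symm (by omega)
  set p := n - m with hp
  have hp1 : 1 ≤ p := by omega
  have step : ∀ s, m ≤ s → a ^ s = a ^ (s + p) := by
    intro s hs
    have : a ^ s = a ^ m * a ^ (s - m) := by rw [← pow_add]; congr 1; omega
    rw [this, h, ← pow_add]
    congr 1; omega
  have iter : ∀ k s, m ≤ s → a ^ s = a ^ (s + k * p) := by
    intro k
    induction k with
    | zero => simp
    | succ k ih =>
      intro s hs
      rw [ih s hs, step (s + k * p) (by omega)]
      congr 1; ring
  refine ⟨(m + 1) * p, by nlinarith, ?_⟩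
  rw [← pow_add]
  exact (iter (m + 1) ((m + 1) * p) (by nlinarith)).symm


private theorem aux_card (R : Type) [CommRing R] [Finite R]
    (P : Polynomial R) (hlead : IsUnit P.leadingCoeff)
    (aux_rec : ∀ (w : R), w * P.leadingCoeff = 1 → ∀ (x : PowerSeries R),
      (P : PowerSeries R) * x = 0 → ∀ n,
      PowerSeries.coeff n x =
        ∑ k ∈ Finset.range P.natDegree,
          (-(w * P.coeff (P.natDegree - 1 - k))) * PowerSeries.coeff (n + 1 + k) x)
    (aux_trailing : IsUnit P.trailingCoeff → ∀ x : PowerSeries R,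
      (P : PowerSeries R) * x = 0 → x = 0)
    (aux_idem : ∀ (M : Matrix (Fin P.natDegree) (Fin P.natDegree) R),
      ∃ N : ℕ, 1 ≤ N ∧ M ^ N * M ^ N = M ^ N) :
    Nat.card {x : PowerSeries R // (P : PowerSeries R) * x = 0} ≤ Nat.card R ^ P.natDegree := by
  obtain ⟨u, hu⟩ := hlead
  set d := P.natDegree with hd
  by_cases hd0 : d = 0
  · -- constant polynomial: only the zero solution
    have htc : IsUnit P.trailingCoeff := by
      have he : P.natTrailingDegree = P.natDegree :=
        le_antisymm (P.natTrailingDegree_le_natDegree) (by omega)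
      rw [Polynomial.trailingCoeff, he, ← Polynomial.leadingCoeff]
      exact ⟨u, hu⟩
    haveI : Subsingleton {x : PowerSeries R // (P : PowerSeries R) * x = 0} :=
      ⟨fun a b => Subtype.ext (by
        rw [aux_trailing htc a.1 a.2, aux_trailing htc b.1 b.2])⟩
    rw [hd0, pow_zero]
    calc Nat.card {x : PowerSeries R // (P : PowerSeries R) * x = 0}
        ≤ Nat.card Unit :=
          Nat.card_le_card_of_injective (fun _ => ())
            (fun a b _ => Subsingleton.elim a b)
      _ = 1 := by simp
  · have hw : ((u⁻¹ : Rˣ) : R) * P.leadingCoeff = 1 := by rw [← hu]; exact u.inv_mul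
    set w := ((u⁻¹ : Rˣ) : R) with hwdef
    -- the companion-type matrix
    set M : Matrix (Fin d) (Fin d) R := fun i k =>
      if (i : ℕ) = 0 then -(w * P.coeff (d - 1 - (k : ℕ)))
      else if (k : ℕ) + 1 = (i : ℕ) then 1 else 0 with hM
    -- coefficient vectors
    have step : ∀ (x : PowerSeries R), (P : PowerSeries R) * x = 0 → ∀ n : ℕ,
        (fun i : Fin d => PowerSeries.coeff (n + i) x)
          = M.mulVec (fun i : Fin d => PowerSeries.coeff (n + 1 + i) x) := by
      intro x hx n
      funext i
      by_cases hi : (i : ℕ) = 0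
      · simp only [Matrix.mulVec, dotProduct, hM, hi, if_true, hi]
        rw [Nat.add_zero, aux_rec w hw x hx n]
        exact (Fin.sum_univ_eq_sum_range
          (fun k => (-(w * P.coeff (d - 1 - k))) * PowerSeries.coeff (n + 1 + k) x) d).symm
      · simp only [Matrix.mulVec, dotProduct, hM, hi, if_false]
        rw [Finset.sum_eq_single (⟨(i : ℕ) - 1, by have := i.isLt; omega⟩ : Fin d)]
        · simp only []
          have h1 : ((i : ℕ) - 1) + 1 = (i : ℕ) := by omega
          rw [if_pos h1, one_mul, show n + 1 + ((i : ℕ) - 1) = n + (i : ℕ) by omega]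
        · intro b _ hb
          have : ¬ ((b : ℕ) + 1 = (i : ℕ)) := by
            intro hcon
            apply hb
            apply Fin.ext
            simp only []
            omega
          rw [if_neg this, zero_mul]
        · intro hcon
          exact absurd (Finset.mem_univ _) hcon
    have iter : ∀ (x : PowerSeries R), (P : PowerSeries R) * x = 0 → ∀ n k : ℕ,
        (fun i : Fin d => PowerSeries.coeff (n + i) x)
          = (M ^ k).mulVec (fun i : Fin d => PowerSeries.coeff (n + k + i) x) := by
      intro x hx n k
      induction k generalizing n with
      | zero => simp
      | succ k ih =>
        rw [step x hx n, ih (n + 1), Matrix.mulVec_mulVec, ← pow_succ']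
        have : n + 1 + k = n + (k + 1) := by omega
        rw [this]
    obtain ⟨N, hN1, hNidem⟩ := aux_idem M
    have key : ∀ (x : PowerSeries R), (P : PowerSeries R) * x = 0 → ∀ n : ℕ,
        (fun i : Fin d => PowerSeries.coeff (n + 1 + i) x)
          = (M ^ (N - 1)).mulVec (fun i : Fin d => PowerSeries.coeff (n + i) x) := by
      intro x hx n
      have e1 : (fun i : Fin d => PowerSeries.coeff (n + 1 + i) x)
          = (M ^ N).mulVec (fun i : Fin d => PowerSeries.coeff (n + 1 + N + i) x) :=
        iter x hx (n + 1) N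
      calc (fun i : Fin d => PowerSeries.coeff (n + 1 + i) x)
          = (M ^ N).mulVec (fun i : Fin d => PowerSeries.coeff (n + 1 + N + i) x) := e1
        _ = (M ^ N * M ^ N).mulVec (fun i : Fin d => PowerSeries.coeff (n + 1 + N + i) x) := by
            rw [hNidem]
        _ = (M ^ N).mulVec ((M ^ N).mulVec
              (fun i : Fin d => PowerSeries.coeff (n + 1 + N + i) x)) := by
            rw [Matrix.mulVec_mulVec]
        _ = (M ^ N).mulVec (fun i : Fin d => PowerSeries.coeff (n + 1 + i) x) := by rw [← e1]
        _ = (M ^ (N - 1) * M).mulVec (fun i : Fin d => PowerSeries.coeff (n + 1 + i) x) := by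
            rw [← pow_succ, show N - 1 + 1 = N by omega]
        _ = (M ^ (N - 1)).mulVec (M.mulVec
              (fun i : Fin d => PowerSeries.coeff (n + 1 + i) x)) := by
            rw [Matrix.mulVec_mulVec]
        _ = (M ^ (N - 1)).mulVec (fun i : Fin d => PowerSeries.coeff (n + i) x) := by
            rw [← step x hx n]
    -- injectivity of taking the first d coefficients
    have hinj : Function.Injective
        (fun s : {x : PowerSeries R // (P : PowerSeries R) * x = 0} =>
          (fun i : Fin d => PowerSeries.coeff (i : ℕ) s.1)) := by
      rintro ⟨x, hx⟩ ⟨y, hy⟩ h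
      simp only [] at h
      have hv : ∀ n : ℕ, (fun i : Fin d => PowerSeries.coeff (n + i) x)
          = (fun i : Fin d => PowerSeries.coeff (n + i) y) := by
        intro n
        induction n with
        | zero => funext i; simpa using congrFun h i
        | succ n ih => rw [show n + 1 = n + 1 from rfl, key x hx n, key y hy n, ih]
      apply Subtype.ext
      apply PowerSeries.ext
      intro n
      have := congrFun (hv n) ⟨0, by omega⟩
      simpa using this
    calc Nat.card {x : PowerSeries R // (P : PowerSeries R) * x = 0}
        ≤ Nat.card (Fin d → R) := Nat.card_le_card_of_injective _ hinj
      _ = Nat.card R ^ d := by simp [Nat.card_fun]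

/-- Let `R` be a finite (commutative) ring and `P ∈ R[t]` a polynomial
of degree `d` whose leading coefficient is invertible.  Then `P·x = 0` has at most
`|R|^d` solutions `x` in the power series ring `R[[t]]`; and if moreover the lowest
nonzero coefficient of `P` is invertible, then `x = 0` is the only solution. -/
theorem finite_ring_polynomial_annihilator (R : Type) [CommRing R] [Finite R]
    (P : Polynomial R) (hlead : IsUnit P.leadingCoeff) :
    Nat.card {x : PowerSeries R // (P : PowerSeries R) * x = 0} ≤ Nat.card R ^ P.natDegree ∧
    (IsUnit P.trailingCoeff →
      ∀ x : PowerSeries R, (P : PowerSeries R) * x = 0 → x = 0) := by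
  refine ⟨?_, fun h x hx => aux_trailing P h x hx⟩
  exact aux_card R P hlead (fun w hw x hx n => aux_rec P w hw x hx n)
    (fun h x hx => aux_trailing P h x hx) (fun M => aux_idem M)
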